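/- Let H₁, H₂, E be complex Hilbert spaces, let J : E → E be a bounded operator, let K₁ : E → H₁, K₂ : E → H₂ be bounded operators, let A : H₁ → H₁, M : H₂ → H₂, F : H₂ → H₂ be bounded operators, and let z ∈ ℂ be such that A − zI is invertible on H₁ and M − zF is invertible on H₂. Define the block operators on H₁ × H₂ by M̂(x₁, x₂) = (A x₁ + 2i·K₁JK₂* x₂, M x₂), F̂(x₁, x₂) = (x₁, F x₂), and K : E → H₁ × H₂ by K e = (K₁ e, K₂ e). Then the transfer functions multiply: I − 2i·K*(M̂ − zF̂)⁻¹KJ = (I − 2i·K₁*(A − zI)⁻¹K₁J) ∘ (I − 2i·K₂*(M − zF)⁻¹K₂J) as operators on E. -/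

import Mathlib

open ContinuousLinearMap

/-- Multiplication theorem for transfer functions of an `LF`-coupling:
`I - 2iK*(M̂ - zF̂)⁻¹KJ = (I - 2iK₁*(A - zI)⁻¹K₁J)(I - 2iK₂*(M - zF)⁻¹K₂J)`. -/
theorem stmt_2
    {H₁ H₂ E : Type*}
    [NormedAddCommGroup H₁] [InnerProductSpace ℂ H₁] [CompleteSpace H₁]
    [NormedAddCommGroup H₂] [InnerProductSpace ℂ H₂] [CompleteSpace H₂]
    [NormedAddCommGroup E] [InnerProductSpace ℂ E] [CompleteSpace E]
    (J : E →L[ℂ] E) (K₁ : E →L[ℂ] H₁) (K₂ : E →L[ℂ] H₂)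
    (A : H₁ →L[ℂ] H₁) (M F : H₂ →L[ℂ] H₂) (z : ℂ)
    (Ainv : H₁ →L[ℂ] H₁)
    (hAinv₁ : (A - z • 1) ∘L Ainv = 1) (hAinv₂ : Ainv ∘L (A - z • 1) = 1)
    (MFinv : H₂ →L[ℂ] H₂)
    (hMFinv₁ : (M - z • F) ∘L MFinv = 1) (hMFinv₂ : MFinv ∘L (M - z • F) = 1)
    (Mhat Fhat : WithLp 2 (H₁ × H₂) →L[ℂ] WithLp 2 (H₁ × H₂))
    (hMhat : ∀ (x₁ : H₁) (x₂ : H₂),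
      Mhat ((WithLp.equiv 2 (H₁ × H₂)).symm (x₁, x₂)) =
        (WithLp.equiv 2 (H₁ × H₂)).symm
          (A x₁ + (2 * Complex.I) • K₁ (J (adjoint K₂ x₂)), M x₂))
    (hFhat : ∀ (x₁ : H₁) (x₂ : H₂),
      Fhat ((WithLp.equiv 2 (H₁ × H₂)).symm (x₁, x₂)) =
        (WithLp.equiv 2 (H₁ × H₂)).symm (x₁, F x₂))
    (K : E →L[ℂ] WithLp 2 (H₁ × H₂))
    (hK : ∀ e : E, K e = (WithLp.equiv 2 (H₁ × H₂)).symm (K₁ e, K₂ e))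
    (Minv : WithLp 2 (H₁ × H₂) →L[ℂ] WithLp 2 (H₁ × H₂))
    (hMinv₁ : (Mhat - z • Fhat) ∘L Minv = 1)
    (hMinv₂ : Minv ∘L (Mhat - z • Fhat) = 1) :
    (1 : E →L[ℂ] E) - (2 * Complex.I) • (adjoint K ∘L Minv ∘L (K ∘L J)) =
      ((1 : E →L[ℂ] E) -
          (2 * Complex.I) • (adjoint K₁ ∘L Ainv ∘L (K₁ ∘L J))) ∘L
        ((1 : E →L[ℂ] E) -
          (2 * Complex.I) • (adjoint K₂ ∘L MFinv ∘L (K₂ ∘L J))) := by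
  -- pointwise inverse facts
  have hA : ∀ y : H₁, A (Ainv y) - z • Ainv y = y := by
    intro y
    have := ContinuousLinearMap.ext_iff.mp hAinv₁ y
    simpa [ContinuousLinearMap.comp_apply, ContinuousLinearMap.sub_apply,
      ContinuousLinearMap.smul_apply] using this
  have hMF : ∀ y : H₂, M (MFinv y) - z • F (MFinv y) = y := by
    intro y
    have := ContinuousLinearMap.ext_iff.mp hMFinv₁ y
    simpa [ContinuousLinearMap.comp_apply, ContinuousLinearMap.sub_apply,
      ContinuousLinearMap.smul_apply] using this
  have hM2 : ∀ x : WithLp 2 (H₁ × H₂), Minv ((Mhat - z • Fhat) x) = x := by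
    intro x
    have := ContinuousLinearMap.ext_iff.mp hMinv₂ x
    simpa [ContinuousLinearMap.comp_apply] using this
  -- adjoint of K
  have hKadj : ∀ (x₁ : H₁) (x₂ : H₂),
      adjoint K ((WithLp.equiv 2 (H₁ × H₂)).symm (x₁, x₂)) =
        adjoint K₁ x₁ + adjoint K₂ x₂ := by
    intro x₁ x₂
    apply ext_inner_right ℂ
    intro u
    rw [adjoint_inner_left, inner_add_left, adjoint_inner_left, adjoint_inner_left, hK]
    simp [WithLp.prod_inner_apply]
  ext e
  -- compute Minv (K (J e))
  set b : H₂ := MFinv (K₂ (J e)) with hb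
  set a : H₁ := Ainv (K₁ (J e)) -
      (2 * Complex.I) • Ainv (K₁ (J (adjoint K₂ b))) with ha
  have hv : (Mhat - z • Fhat) ((WithLp.equiv 2 (H₁ × H₂)).symm (a, b)) = K (J e) := by
    rw [ContinuousLinearMap.sub_apply, ContinuousLinearMap.smul_apply, hMhat, hFhat, hK]
    rw [WithLp.equiv_symm_apply, ← WithLp.toLp_smul, ← WithLp.toLp_sub]
    congr 1
    refine Prod.ext ?_ ?_
    · show A a + (2 * Complex.I) • K₁ (J (adjoint K₂ b)) - z • a = K₁ (J e)
      rw [ha]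
      simp only [map_sub, map_smul, smul_sub]
      have h1 : A (Ainv (K₁ (J e))) = K₁ (J e) + z • Ainv (K₁ (J e)) := by
        exact sub_eq_iff_eq_add.mp (hA (K₁ (J e)))
      have h2 : A (Ainv (K₁ (J (adjoint K₂ b)))) =
          K₁ (J (adjoint K₂ b)) + z • Ainv (K₁ (J (adjoint K₂ b))) := by
        exact sub_eq_iff_eq_add.mp (hA (K₁ (J (adjoint K₂ b))))
      rw [h1, h2]
      module
    · show M b - z • F b = K₂ (J e)
      rw [hb]; exact hMF _
  have hMinvK : Minv (K (J e)) = (WithLp.equiv 2 (H₁ × H₂)).symm (a, b) := by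
    rw [← hv, hM2]
  -- final computation
  simp only [ContinuousLinearMap.sub_apply, ContinuousLinearMap.smul_apply,
    ContinuousLinearMap.comp_apply, ContinuousLinearMap.one_apply, hMinvK, hKadj]
  rw [ha]
  simp only [map_sub, map_smul]
  module
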